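/- There exists a binary sequence x ∈ {0,1}^ℕ that is typical but not normal in base 2; i.e. the set TpcN ∖ Normal is nonempty. -/

import Mathlib

open Filter

open Classical in
/-- `L_n(x)`: the maximal length of a run of consecutive ones among the first `n`
digits (positions `1,…,n`) of the binary sequence `x`. -/
noncomputable def runL (x : ℕ → Bool) (n : ℕ) : ℕ :=
  Nat.findGreatest
    (fun j => ∃ i, i + j ≤ n ∧ ∀ k, 1 ≤ k → k ≤ j → x (i + k) = true) n

/-- A binary sequence is typical if `L_n(x)/log₂ n → 1`. -/
def Typical (x : ℕ → Bool) : Prop :=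
  Tendsto (fun n : ℕ => (runL x n : ℝ) / Real.logb 2 (n : ℝ)) atTop (nhds 1)

/-- `N(x, w, n)`: the number of occurrences of the block `w` in `x` starting at
a position `i` with `1 ≤ i ≤ n`. -/
def occCount (x : ℕ → Bool) (w : List Bool) (n : ℕ) : ℕ :=
  ((Finset.Icc 1 n).filter
    (fun i => ∀ k ∈ Finset.range w.length, x (i + k) = w.getD k false)).card

/-- A binary sequence is normal in base 2 if every nonempty block `w` appears
with frequency `2^{-|w|}`. -/
def NormalBaseTwo (x : ℕ → Bool) : Prop :=
  ∀ w : List Bool, w ≠ [] →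
    Tendsto (fun n : ℕ => (occCount x w n : ℝ) / (n : ℝ)) atTop
      (nhds (1 / 2 ^ w.length))

/-! ### The sequence -/

open Classical in
noncomputable def xseq : ℕ → Bool :=
  fun i => decide (∃ m, 1 ≤ m ∧ 2 ^ m ≤ i ∧ i < 2 ^ m + m)

lemma xseq_iff (i : ℕ) : xseq i = true ↔ ∃ m, 1 ≤ m ∧ 2 ^ m ≤ i ∧ i < 2 ^ m + m := by
  classical
  simp [xseq]

/-- Blocks are disjoint: a position lies in at most one block. -/
lemma block_unique {i a b : ℕ}
    (h1 : 2 ^ a ≤ i) (h2 : i < 2 ^ a + a) (h3 : 2 ^ b ≤ i) (h4 : i < 2 ^ b + b) : a = b := by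
  by_contra hne
  rcases Nat.lt_or_ge a b with h | h
  · have : 2 ^ a + a ≤ 2 ^ b := by
      calc 2 ^ a + a ≤ 2 ^ a + 2 ^ a := by
            have := (Nat.lt_two_pow_self (n := a)).le; omega
        _ = 2 ^ (a + 1) := by ring
        _ ≤ 2 ^ b := Nat.pow_le_pow_right (by norm_num) h
    omega
  · have hlt : b < a := lt_of_le_of_ne h (Ne.symm hne)
    have : 2 ^ b + b ≤ 2 ^ a := by
      calc 2 ^ b + b ≤ 2 ^ b + 2 ^ b := by
            have := (Nat.lt_two_pow_self (n := b)).le; omega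
        _ = 2 ^ (b + 1) := by ring
        _ ≤ 2 ^ a := Nat.pow_le_pow_right (by norm_num) hlt
    omega

/-- Lower bound on the maximal run: if a whole block fits in `[1,n]`. -/
lemma runL_ge {n m : ℕ} (hm : 1 ≤ m) (h : 2 ^ m + m ≤ n) : m ≤ runL xseq n := by
  classical
  have hmn : m ≤ n := by have := Nat.lt_two_pow_self (n := m); omega
  refine Nat.le_findGreatest hmn ?_
  refine ⟨2 ^ m - 1, ?_, ?_⟩
  · have h1 : 1 ≤ 2 ^ m := Nat.one_le_two_pow
    omega
  · intro k hk1 hkm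
    rw [xseq_iff]
    have h1 : 1 ≤ 2 ^ m := Nat.one_le_two_pow
    exact ⟨m, hm, by omega, by omega⟩

/-- Upper bound on the maximal run. -/
lemma runL_le {n : ℕ} (hn : 1 ≤ n) : runL xseq n ≤ Nat.log2 n := by
  classical
  set j := runL xseq n with hj
  rcases Nat.eq_zero_or_pos j with h0 | hpos
  · omega
  obtain ⟨i, hin, hall⟩ :=
    Nat.findGreatest_of_ne_zero (P := fun j => ∃ i, i + j ≤ n ∧
      ∀ k, 1 ≤ k → k ≤ j → xseq (i + k) = true) hj.symm (by omega)
  -- The first position of the run lies in some block m₁.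
  obtain ⟨m₁, hm₁1, hm₁l, hm₁r⟩ := (xseq_iff _).mp (hall 1 le_rfl hpos)
  -- All positions of the run stay in the block m₁.
  have hblock : ∀ k, 1 ≤ k → k ≤ j → 2 ^ m₁ ≤ i + k ∧ i + k < 2 ^ m₁ + m₁ := by
    intro k
    induction k with
    | zero => omega
    | succ k ih =>
      intro _ hk
      rcases Nat.eq_zero_or_pos k with hk0 | hk0
      · subst hk0; exact ⟨hm₁l, hm₁r⟩
      · obtain ⟨hl, hr⟩ := ih hk0 (by omega)
        obtain ⟨m', hm'1, hm'l, hm'r⟩ := (xseq_iff _).mp (hall (k+1) (by omega) hk)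
        rcases Nat.lt_trichotomy m' m₁ with h | h | h
        · -- m' < m₁ impossible
          exfalso
          have : 2 ^ m' + m' ≤ 2 ^ m₁ := by
            calc 2 ^ m' + m' ≤ 2 ^ m' + 2 ^ m' := by
                  have := (Nat.lt_two_pow_self (n := m')).le; omega
              _ = 2 ^ (m' + 1) := by ring
              _ ≤ 2 ^ m₁ := Nat.pow_le_pow_right (by norm_num) h
          omega
        · subst h; omega
        · -- m₁ < m' impossible
          exfalso
          have : 2 ^ m₁ + m₁ < 2 ^ m' := by
            calc 2 ^ m₁ + m₁ < 2 ^ m₁ + 2 ^ m₁ := by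
                  have := Nat.lt_two_pow_self (n := m₁); omega
              _ = 2 ^ (m₁ + 1) := by ring
              _ ≤ 2 ^ m' := Nat.pow_le_pow_right (by norm_num) h
          omega
  -- hence j ≤ m₁ and 2 ^ m₁ ≤ n
  have h1 := hblock 1 le_rfl hpos
  have h2 := hblock j hpos le_rfl
  have hjm : j ≤ m₁ := by omega
  have hpow : 2 ^ m₁ ≤ n := by omega
  have : m₁ ≤ Nat.log2 n := (Nat.le_log2 (by omega)).mpr hpow
  omega

/-- `Nat.log2` tends to infinity. -/
lemma log2_tendsto : Tendsto Nat.log2 atTop atTop := by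
  apply tendsto_atTop_atTop.mpr
  intro b
  refine ⟨2 ^ b, fun n hn => ?_⟩
  have hn0 : n ≠ 0 := by have : 0 < 2 ^ b := (by positivity); omega
  exact (Nat.le_log2 hn0).mpr hn

lemma typical_xseq : Typical xseq := by
  have hlim : Tendsto (fun k : ℕ => ((k : ℝ) - 1) / ((k : ℝ) + 1)) atTop (nhds 1) := by
    have h2 : Tendsto (fun k : ℕ => (2 : ℝ) / ((k : ℝ) + 1)) atTop (nhds 0) :=
      Tendsto.div_atTop tendsto_const_nhds
        (tendsto_atTop_add_const_right _ 1 tendsto_natCast_atTop_atTop)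
    have h3 := ((tendsto_const_nhds : Tendsto (fun _ : ℕ => (1:ℝ)) atTop (nhds 1)).sub h2)
    rw [sub_zero] at h3
    refine h3.congr (fun k => ?_)
    have hk : ((k : ℝ) + 1) ≠ 0 := by positivity
    field_simp
    ring
  have hg : Tendsto (fun n : ℕ => ((Nat.log2 n : ℝ) - 1) / ((Nat.log2 n : ℝ) + 1))
      atTop (nhds 1) := hlim.comp log2_tendsto
  refine tendsto_of_tendsto_of_tendsto_of_le_of_le' hg tendsto_const_nhds ?_ ?_
  · -- lower bound, for n ≥ 4
    filter_upwards [eventually_ge_atTop 4] with n hn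
    set N := Nat.log2 n with hN
    have hn0 : n ≠ 0 := by omega
    have hN2 : 2 ≤ N := (Nat.le_log2 hn0).mpr (by norm_num; omega)
    have hpowle : 2 ^ N ≤ n := (Nat.le_log2 hn0).mp le_rfl
    have hlt : n < 2 ^ (N + 1) := Nat.lt_of_not_le fun h => by
      have := (Nat.le_log2 hn0).mpr h; omega
    -- runL ≥ N - 1
    have hrun : N - 1 ≤ runL xseq n := by
      refine runL_ge (by omega) ?_
      have : 2 ^ (N - 1) + (N - 1) ≤ 2 ^ N := by
        have h1 : N - 1 ≤ 2 ^ (N - 1) := (Nat.lt_two_pow_self (n := N-1)).le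
        have h2 : 2 ^ (N - 1) + 2 ^ (N - 1) = 2 ^ N := by
          rw [← two_mul, ← pow_succ']
          congr 1
          omega
        omega
      omega
    -- logb bounds
    have hlogpos : (0 : ℝ) < Real.logb 2 n := by
      apply Real.logb_pos (by norm_num)
      exact_mod_cast by omega
    have hlogle : Real.logb 2 n ≤ (N : ℝ) + 1 := by
      have : (n : ℝ) ≤ (2 : ℝ) ^ (N + 1) := by exact_mod_cast hlt.le
      calc Real.logb 2 n ≤ Real.logb 2 ((2:ℝ) ^ (N+1)) :=
            Real.logb_le_logb_of_le (by norm_num) (by positivity) this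
        _ = (N : ℝ) + 1 := by
            rw [Real.logb_pow, Real.logb_self_eq_one (by norm_num)]
            push_cast; ring
    -- (N-1)/(N+1) ≤ runL / logb
    have hNR : ((N : ℝ) - 1) ≥ 0 := by
      have : (2 : ℝ) ≤ (N : ℝ) := by exact_mod_cast hN2
      linarith
    have hrunR : ((N : ℝ) - 1) ≤ (runL xseq n : ℝ) := by
      have : ((N - 1 : ℕ) : ℝ) ≤ (runL xseq n : ℝ) := by exact_mod_cast hrun
      have hcast : ((N - 1 : ℕ) : ℝ) = (N : ℝ) - 1 := by
        have : 1 ≤ N := by omega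
        push_cast [this]; ring
      linarith
    exact div_le_div₀ (by positivity) hrunR hlogpos hlogle
  · -- upper bound ≤ 1, for n ≥ 2
    filter_upwards [eventually_ge_atTop 2] with n hn
    have hn0 : n ≠ 0 := by omega
    have hlogpos : (0 : ℝ) < Real.logb 2 n := by
      apply Real.logb_pos (by norm_num)
      exact_mod_cast by omega
    rw [div_le_one hlogpos]
    have h1 : runL xseq n ≤ Nat.log2 n := runL_le (by omega)
    have h2 : (Nat.log2 n : ℝ) ≤ Real.logb 2 n := by
      have hpowle : 2 ^ Nat.log2 n ≤ n := (Nat.le_log2 hn0).mp le_rfl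
      have : ((2:ℝ) ^ Nat.log2 n) ≤ (n : ℝ) := by exact_mod_cast hpowle
      calc (Nat.log2 n : ℝ) = Real.logb 2 ((2:ℝ) ^ Nat.log2 n) := by
            rw [Real.logb_pow, Real.logb_self_eq_one (by norm_num)]; ring
        _ ≤ Real.logb 2 n := Real.logb_le_logb_of_le (by norm_num) (by positivity) this
    calc (runL xseq n : ℝ) ≤ (Nat.log2 n : ℝ) := by exact_mod_cast h1
      _ ≤ Real.logb 2 n := h2

/-! ### Not normal -/

lemma four_sq_le_pow {N : ℕ} (h : 9 ≤ N) : 4 * N ^ 2 ≤ 2 ^ N := by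
  induction N with
  | zero => omega
  | succ N ih =>
    rcases Nat.lt_or_ge N 9 with h9 | h9
    · interval_cases N <;> simp_all
    · have := ih h9
      have hN : 2 * (N + 1) ^ 2 ≤ 4 * N ^ 2 := by nlinarith
      calc 4 * (N + 1) ^ 2 = 2 * (2 * (N + 1) ^ 2) := by ring
        _ ≤ 2 * (4 * N ^ 2) := by omega
        _ ≤ 2 * 2 ^ N := by omega
        _ = 2 ^ (N + 1) := by ring

lemma occ_eq (n : ℕ) :
    occCount xseq [true] n = ((Finset.Icc 1 n).filter (fun i => xseq i = true)).card := by
  unfold occCount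
  congr 1
  apply Finset.filter_congr
  intro i _
  simp

lemma occ_bound {n : ℕ} (hn : n ≠ 0) :
    occCount xseq [true] n ≤ (Nat.log2 n) ^ 2 := by
  classical
  rw [occ_eq]
  set N := Nat.log2 n with hN
  have hsub : (Finset.Icc 1 n).filter (fun i => xseq i = true) ⊆
      (Finset.Icc 1 N).biUnion (fun m => Finset.Ico (2 ^ m) (2 ^ m + m)) := by
    intro i hi
    rw [Finset.mem_filter] at hi
    obtain ⟨hi1, hx⟩ := hi
    rw [Finset.mem_Icc] at hi1
    obtain ⟨m, hm1, hl, hr⟩ := (xseq_iff i).mp hx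
    have hmN : m ≤ N := (Nat.le_log2 hn).mpr (le_trans hl hi1.2)
    rw [Finset.mem_biUnion]
    exact ⟨m, Finset.mem_Icc.mpr ⟨hm1, hmN⟩, Finset.mem_Ico.mpr ⟨hl, hr⟩⟩
  calc ((Finset.Icc 1 n).filter (fun i => xseq i = true)).card
      ≤ ((Finset.Icc 1 N).biUnion (fun m => Finset.Ico (2 ^ m) (2 ^ m + m))).card :=
        Finset.card_le_card hsub
    _ ≤ ∑ m ∈ Finset.Icc 1 N, (Finset.Ico (2 ^ m) (2 ^ m + m)).card :=
        Finset.card_biUnion_le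
    _ ≤ ∑ m ∈ Finset.Icc 1 N, N := by
        apply Finset.sum_le_sum
        intro m hm
        rw [Nat.card_Ico]
        rw [Finset.mem_Icc] at hm
        omega
    _ = (Finset.Icc 1 N).card * N := by rw [Finset.sum_const, smul_eq_mul]
    _ ≤ N * N := by
        rw [Nat.card_Icc]
        apply Nat.mul_le_mul_right
        omega
    _ = N ^ 2 := by ring

lemma not_normal_xseq : ¬ NormalBaseTwo xseq := by
  intro h
  have h1 := h [true] (by simp)
  simp only [List.length_singleton] at h1
  have hev : ∀ᶠ n : ℕ in atTop, (1 : ℝ) / 4 < (occCount xseq [true] n : ℝ) / n :=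
    h1.eventually (eventually_gt_nhds (by norm_num))
  have hev2 : ∀ᶠ n : ℕ in atTop, (occCount xseq [true] n : ℝ) / n ≤ 1 / 4 := by
    filter_upwards [eventually_ge_atTop 512] with n hn
    have hn0 : n ≠ 0 := by omega
    have hN9 : 9 ≤ Nat.log2 n := (Nat.le_log2 hn0).mpr (by norm_num; omega)
    have hpow : 2 ^ Nat.log2 n ≤ n := (Nat.le_log2 hn0).mp le_rfl
    have hocc : 4 * occCount xseq [true] n ≤ n := by
      have ha := occ_bound hn0
      have hb := four_sq_le_pow hN9
      omega
    rw [div_le_div_iff₀ (by positivity) (by norm_num)]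
    have : (4 : ℝ) * occCount xseq [true] n ≤ n := by exact_mod_cast hocc
    linarith
  obtain ⟨n, hlt, hle⟩ := (hev.and hev2).exists
  linarith

/-- There is a binary sequence that is typical but not normal in base 2:
`TpcN ∖ Normal ≠ ∅`. -/
theorem typical_not_normal_nonempty :
    ∃ x : ℕ → Bool, Typical x ∧ ¬ NormalBaseTwo x :=
  ⟨xseq, typical_xseq, not_normal_xseq⟩
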